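/- arXiv:2105.03955 — 6 statements merged into one kernel-verified Lean document; each statement's English description precedes it below -/
import Mathlib

section
/- Let α be a derivation of a finite-dimensional real nilpotent Lie algebra 𝔫 such that every eigenvalue of α (over ℂ) has real part equal to a fixed σ > 0. Then 𝔫 is abelian. -/
open TensorProduct

section Aux

variable {M : Type*} [LieRing M] [LieAlgebra ℂ M]

private lemma aux_single_step (D : Module.End ℂ M)
    (hD : ∀ x y : M, D ⁅x, y⁆ = ⁅D x, y⁆ + ⁅x, D y⁆) (a b : ℂ) (x y : M) :
    (D - (a + b) • 1) ⁅x, y⁆ = ⁅(D - a • 1) x, y⁆ + ⁅x, (D - b • 1) y⁆ := by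
  simp only [LinearMap.sub_apply, LinearMap.smul_apply, Module.End.one_apply, hD,
    sub_lie, lie_sub, smul_lie, lie_smul, add_smul, LinearMap.add_apply]
  abel

private lemma aux_pow_vanish (D : Module.End ℂ M)
    (hD : ∀ x y : M, D ⁅x, y⁆ = ⁅D x, y⁆ + ⁅x, D y⁆) (a b : ℂ) :
    ∀ (n p q : ℕ), p + q ≤ n + 1 → ∀ (x y : M),
      ((D - a • 1) ^ p) x = 0 → ((D - b • 1) ^ q) y = 0 →
      ((D - (a + b) • 1) ^ n) ⁅x, y⁆ = 0 := by
  intro n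
  induction n with
  | zero =>
    intro p q hpq x y hx hy
    have h : p = 0 ∨ q = 0 := by omega
    rcases h with rfl | rfl
    · simp only [pow_zero, Module.End.one_apply] at hx
      simp [hx]
    · simp only [pow_zero, Module.End.one_apply] at hy
      simp [hy]
  | succ n ih =>
    intro p q hpq x y hx hy
    rcases Nat.eq_zero_or_pos p with hp | hp
    · subst hp
      simp only [pow_zero, Module.End.one_apply] at hx
      simp [hx]
    rcases Nat.eq_zero_or_pos q with hq | hq
    · subst hq
      simp only [pow_zero, Module.End.one_apply] at hy
      simp [hy]
    obtain ⟨p', rfl⟩ := Nat.exists_eq_succ_of_ne_zero hp.ne'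
    obtain ⟨q', rfl⟩ := Nat.exists_eq_succ_of_ne_zero hq.ne'
    rw [pow_succ, Module.End.mul_apply, aux_single_step D hD a b x y, map_add]
    have h1 : ((D - (a + b) • 1) ^ n) ⁅(D - a • 1) x, y⁆ = 0 := by
      apply ih p' (q' + 1) (by omega)
      · rw [← Module.End.mul_apply, ← pow_succ]
        exact hx
      · exact hy
    have h2 : ((D - (a + b) • 1) ^ n) ⁅x, (D - b • 1) y⁆ = 0 := by
      apply ih (p' + 1) q' (by omega)
      · exact hx
      · rw [← Module.End.mul_apply, ← pow_succ]
        exact hy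
    rw [h1, h2, add_zero]

private lemma aux_lie_mem_maxGenEigenspace (D : Module.End ℂ M)
    (hD : ∀ x y : M, D ⁅x, y⁆ = ⁅D x, y⁆ + ⁅x, D y⁆) {a b : ℂ} {x y : M}
    (hx : x ∈ D.maxGenEigenspace a) (hy : y ∈ D.maxGenEigenspace b) :
    ⁅x, y⁆ ∈ D.maxGenEigenspace (a + b) := by
  rw [Module.End.mem_maxGenEigenspace] at hx hy ⊢
  obtain ⟨p, hp⟩ := hx
  obtain ⟨q, hq⟩ := hy
  exact ⟨p + q, aux_pow_vanish D hD a b (p + q) p q (by omega) x y hp hq⟩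

end Aux

/-- If all eigenvalues (over `ℂ`) of a derivation of a finite-dimensional real nilpotent
Lie algebra have real part equal to a fixed `σ > 0`, then the Lie algebra is abelian. -/
theorem stmt_8 (L : Type) [LieRing L] [LieAlgebra ℝ L] [FiniteDimensional ℝ L]
    [LieRing.IsNilpotent L]
    (α : LieDerivation ℝ L L) (σ : ℝ) (hσ : 0 < σ)
    (heig : ∀ μ : ℂ,
      Module.End.HasEigenvalue (LinearMap.baseChange ℂ α.toLinearMap) μ → μ.re = σ) :
    IsLieAbelian L := by
  set M := ℂ ⊗[ℝ] L with hMdef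
  set D : Module.End ℂ M := LinearMap.baseChange ℂ α.toLinearMap with hDdef
  -- local versions of the bracket lemmas (the `Bracket` instance on `ℂ ⊗[ℝ] L` is
  -- definitionally, but not syntactically, the one appearing in the generic lemmas)
  have lzero : ∀ x : M, ⁅x, (0 : M)⁆ = 0 := fun x => lie_zero x
  have zlie : ∀ y : M, ⁅(0 : M), y⁆ = 0 := fun y => zero_lie y
  have ladd : ∀ x y z : M, ⁅x, y + z⁆ = ⁅x, y⁆ + ⁅x, z⁆ := fun x y z => lie_add x y z
  have addl : ∀ x y z : M, ⁅x + y, z⁆ = ⁅x, z⁆ + ⁅y, z⁆ := fun x y z => add_lie x y z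
  have hskew : ∀ x y : M, -⁅y, x⁆ = ⁅x, y⁆ := fun x y => lie_skew x y
  -- Leibniz property of the base-changed derivation
  have hD : ∀ x y : M, D ⁅x, y⁆ = ⁅D x, y⁆ + ⁅x, D y⁆ := by
    intro x y
    induction x using TensorProduct.induction_on with
    | zero => simp only [zlie, map_zero, add_zero]
    | tmul s l =>
      induction y using TensorProduct.induction_on with
      | zero => simp only [lzero, map_zero, add_zero]
      | tmul t m =>
        rw [hDdef]
        rw [show ⁅s ⊗ₜ[ℝ] l, t ⊗ₜ[ℝ] m⁆ = (s * t) ⊗ₜ[ℝ] ⁅l, m⁆ from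
          LieAlgebra.ExtendScalars.bracket_tmul ℝ ℂ L L s t l m]
        rw [LinearMap.baseChange_tmul, LinearMap.baseChange_tmul, LinearMap.baseChange_tmul]
        rw [show (α.toLinearMap : L →ₗ[ℝ] L) ⁅l, m⁆ = ⁅l, α m⁆ + ⁅α l, m⁆ from
          α.apply_lie_eq_add l m]
        rw [tmul_add]
        rw [show ⁅s ⊗ₜ[ℝ] (α.toLinearMap l), t ⊗ₜ[ℝ] m⁆ = (s * t) ⊗ₜ[ℝ] ⁅α l, m⁆ from
          LieAlgebra.ExtendScalars.bracket_tmul ℝ ℂ L L s t _ m]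
        rw [show ⁅s ⊗ₜ[ℝ] l, t ⊗ₜ[ℝ] (α.toLinearMap m)⁆ = (s * t) ⊗ₜ[ℝ] ⁅l, α m⁆ from
          LieAlgebra.ExtendScalars.bracket_tmul ℝ ℂ L L s t l _]
        abel
      | add y₁ y₂ h₁ h₂ =>
        rw [ladd, map_add, h₁, h₂, map_add, ladd, ladd]
        abel
    | add x₁ x₂ h₁ h₂ =>
      rw [addl, map_add, h₁, h₂, map_add, addl, addl]
      abel
  -- if a maximal generalized eigenspace is nonzero, the real part of its eigenvalue is σ
  have hre : ∀ (a : ℂ) (z : M), z ∈ D.maxGenEigenspace a → z ≠ 0 → a.re = σ := by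
    intro a z hz hz0
    apply heig
    rw [Module.End.mem_maxGenEigenspace] at hz
    obtain ⟨k, hk⟩ := hz
    have hk' : D.HasGenEigenvalue a k := by
      rw [Module.End.HasGenEigenvalue]
      intro hbot
      apply hz0
      have hz' : z ∈ D.genEigenspace a k := by
        rw [Module.End.mem_genEigenspace_nat, LinearMap.mem_ker]
        exact hk
      rw [hbot] at hz'
      rwa [Submodule.mem_bot] at hz'
    exact Module.End.hasEigenvalue_of_hasGenEigenvalue hk'
  -- brackets of generalized eigenvectors vanish
  have hbrk : ∀ (a b : ℂ) (x y : M), x ∈ D.maxGenEigenspace a → y ∈ D.maxGenEigenspace b →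
      ⁅x, y⁆ = 0 := by
    intro a b x y hx hy
    by_contra h
    have hx0 : x ≠ 0 := by rintro rfl; exact h (zlie y)
    have hy0 : y ≠ 0 := by rintro rfl; exact h (lzero x)
    have ha : a.re = σ := hre a x hx hx0
    have hb : b.re = σ := hre b y hy hy0
    have hab : (a + b).re = σ :=
      hre (a + b) ⁅x, y⁆ (aux_lie_mem_maxGenEigenspace D hD hx hy) h
    rw [Complex.add_re, ha, hb] at hab
    linarith
  -- generalized eigenspaces span everything
  have htop : ⨆ μ : ℂ, D.maxGenEigenspace μ = ⊤ := Module.End.iSup_maxGenEigenspace_eq_top D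
  -- hence the complexification is abelian
  have step1 : ∀ (a : ℂ) (x : M), x ∈ D.maxGenEigenspace a → ∀ y : M, ⁅x, y⁆ = 0 := by
    intro a x hx y
    have hle : (⨆ μ : ℂ, D.maxGenEigenspace μ) ≤ LinearMap.ker (LieAlgebra.ad ℂ M x) :=
      iSup_le fun b z hz => LinearMap.mem_ker.mpr (by
        rw [LieAlgebra.ad_apply]; exact hbrk a b x z hx hz)
    have hy : y ∈ LinearMap.ker (LieAlgebra.ad ℂ M x) := hle (htop ▸ Submodule.mem_top)
    rw [LinearMap.mem_ker, LieAlgebra.ad_apply] at hy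
    exact hy
  have habs : ∀ x y : M, ⁅x, y⁆ = 0 := by
    intro x y
    have hle : (⨆ μ : ℂ, D.maxGenEigenspace μ) ≤ LinearMap.ker (LieAlgebra.ad ℂ M y) := by
      refine iSup_le fun a z hz => LinearMap.mem_ker.mpr ?_
      rw [LieAlgebra.ad_apply]
      have hz0 : ⁅y, z⁆ = 0 := by rw [← hskew y z, step1 a z hz y, neg_zero]
      exact hz0
    have hx : ⁅y, x⁆ = 0 := by
      have h := hle (htop ▸ Submodule.mem_top : x ∈ _)
      rw [LinearMap.mem_ker, LieAlgebra.ad_apply] at h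
      exact h
    rw [← hskew x y, hx, neg_zero]
  -- descend to L
  constructor
  intro x y
  have h1 : (1 : ℂ) ⊗ₜ[ℝ] ⁅x, y⁆ = (0 : M) := by
    have h := habs ((1 : ℂ) ⊗ₜ[ℝ] x) ((1 : ℂ) ⊗ₜ[ℝ] y)
    rwa [show ⁅(1 : ℂ) ⊗ₜ[ℝ] x, (1 : ℂ) ⊗ₜ[ℝ] y⁆ = ((1 : ℂ) * 1) ⊗ₜ[ℝ] ⁅x, y⁆ from
      LieAlgebra.ExtendScalars.bracket_tmul ℝ ℂ L L 1 1 x y, one_mul] at h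
  have h2 := congrArg (fun z : M =>
    (TensorProduct.lid ℝ L) ((LinearMap.rTensor L Complex.reLm) z)) h1
  simpa using h2
end

section
/- Let 𝔤 be a finite-dimensional real completely solvable Lie algebra such that 𝔤 = [𝔤,𝔤] ⊕ ℝA with [𝔤,𝔤] abelian of dimension n−1 and ad_A unipotent on [𝔤,𝔤] (i.e., ad_A − id is nilpotent on [𝔤,𝔤]). Then there is a one-parameter family φ_t ∈ GL(𝔤) such that the Lie brackets φ_t^{-1}[φ_t X, φ_t Y] converge as t → ∞ to the bracket of 𝔟(n,ℝ) = ℝ^{n−1} ⋊_1 ℝ (the abelian algebra ℝ^{n−1} extended by a derivation acting as the identity). -/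
open Module Submodule Filter

lemma adapted_basis : ∀ (k : ℕ) (V : Type) [AddCommGroup V] [Module ℝ V]
    [FiniteDimensional ℝ V] (N : V →ₗ[ℝ] V), N ^ k = 0 →
    ∃ (ι : Type) (_ : Fintype ι) (b : Basis ι ℝ V) (d : ι → ℕ),
      ∀ j : ι, N (b j) ∈ span ℝ (b '' {i | d i < d j}) := by
  intro k
  induction k with
  | zero =>
    intro V _ _ _ N hN
    have : Subsingleton V := by
      constructor
      intro a b
      have ha : (N ^ 0) a = 0 := by rw [hN]; rfl
      have hb : (N ^ 0) b = 0 := by rw [hN]; rfl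
      simpa using ha.trans hb.symm
    exact ⟨Empty, inferInstance, Basis.empty V, fun _ => 0, fun j => j.elim⟩
  | succ k ih =>
    intro V _ _ _ N hN
    set p : Submodule ℝ V := LinearMap.ker N with hp
    have hle : p ≤ p.comap N := by
      intro x hx
      simp only [hp, LinearMap.mem_ker] at hx
      simp [hp, Submodule.mem_comap, LinearMap.mem_ker, hx]
    set N' : (V ⧸ p) →ₗ[ℝ] (V ⧸ p) := p.mapQ p N hle with hN'def
    have hN' : N' ^ k = 0 := by
      rw [hN'def, ← Submodule.mapQ_pow]
      apply LinearMap.ext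
      intro q
      obtain ⟨x, rfl⟩ := Submodule.Quotient.mk_surjective p q
      rw [Submodule.mapQ_apply]
      have : (N ^ k) x ∈ p := by
        simp only [hp, LinearMap.mem_ker, ← Module.End.mul_apply, ← pow_succ']
        rw [hN]; rfl
      simpa [Submodule.Quotient.mk_eq_zero] using this
    obtain ⟨ι', _, b', d', hb'⟩ := ih (V ⧸ p) N' hN'
    obtain ⟨C, hC⟩ := Submodule.exists_isCompl p
    set e := Submodule.quotientEquivOfIsCompl p C hC with he
    set bC : Basis ι' ℝ C := b'.map e with hbC
    set bK : Basis (Fin (finrank ℝ p)) ℝ p := Module.finBasis ℝ p with hbK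
    set b : Basis (Fin (finrank ℝ p) ⊕ ι') ℝ V :=
      (bK.prod bC).map (Submodule.prodEquivOfIsCompl p C hC) with hb
    set d : Fin (finrank ℝ p) ⊕ ι' → ℕ := Sum.elim (fun _ => 0) (fun i => d' i + 1) with hd
    refine ⟨_, inferInstance, b, d, ?_⟩
    have hbinl : ∀ a, b (Sum.inl a) = (bK a : V) := by
      intro a
      simp [hb, Basis.prod_apply, Submodule.coe_prodEquivOfIsCompl]
    have hbinr : ∀ a, b (Sum.inr a) = (bC a : V) := by
      intro a
      simp [hb, Basis.prod_apply, Submodule.coe_prodEquivOfIsCompl]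
    have hpspan : ∀ (s : Set (Fin (finrank ℝ p) ⊕ ι')), (∀ a, Sum.inl a ∈ s) →
        p ≤ span ℝ (b '' s) := by
      intro s hs
      have h1 : p = span ℝ (p.subtype '' Set.range bK) := by
        rw [← Submodule.map_span, bK.span_eq, Submodule.map_subtype_top]
      refine le_trans h1.le (Submodule.span_le.mpr ?_)
      rintro _ ⟨_, ⟨a, rfl⟩, rfl⟩
      refine Submodule.subset_span ⟨Sum.inl a, hs a, ?_⟩
      simp [hbinl]
    rintro (a | a)
    · have : b (Sum.inl a) ∈ p := by rw [hbinl]; exact (bK a).2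
      have : N (b (Sum.inl a)) = 0 := this
      rw [this]
      exact Submodule.zero_mem _
    · -- the interesting case
      have hmk : p.mkQ (b (Sum.inr a)) = b' a := by
        rw [hbinr]
        simp only [hbC, Basis.map_apply, he]
        exact Submodule.mk_quotientEquivOfIsCompl_apply hC (b' a)
      have hkey : p.mkQ (N (b (Sum.inr a))) = N' (b' a) := by
        rw [← hmk, hN'def]
        simp [Submodule.mapQ_apply, Submodule.mkQ_apply]
      have hmem : N' (b' a) ∈ span ℝ (b' '' {i | d' i < d' a}) := hb' a
      set T : Set V := b '' (Sum.inr '' {i | d' i < d' a}) with hT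
      have himg : p.mkQ '' T = b' '' {i | d' i < d' a} := by
        rw [hT, ← Set.image_comp, ← Set.image_comp]
        apply Set.image_congr
        intro i _
        show p.mkQ (b (Sum.inr i)) = b' i
        rw [hbinr]
        simp only [hbC, Basis.map_apply, he]
        exact Submodule.mk_quotientEquivOfIsCompl_apply hC (b' i)
      have hmem2 : p.mkQ (N (b (Sum.inr a))) ∈ Submodule.map p.mkQ (span ℝ T) := by
        rw [Submodule.map_span, himg, hkey]
        exact hmem
      obtain ⟨y, hy, hyeq⟩ := hmem2
      have hdiff : N (b (Sum.inr a)) - y ∈ p := by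
        have h0 : p.mkQ (N (b (Sum.inr a)) - y) = 0 := by rw [map_sub, hyeq, sub_self]
        rwa [Submodule.mkQ_apply, Submodule.Quotient.mk_eq_zero] at h0
      have hTS : T ⊆ b '' {i | d i < d (Sum.inr a)} := by
        rw [hT]
        apply Set.image_mono
        rintro _ ⟨i, hi, rfl⟩
        simpa [hd] using Nat.succ_lt_succ hi
      have h1 : y ∈ span ℝ (b '' {i | d i < d (Sum.inr a)}) :=
        Submodule.span_mono hTS hy
      have h2 : N (b (Sum.inr a)) - y ∈ span ℝ (b '' {i | d i < d (Sum.inr a)}) := by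
        apply hpspan _ _ hdiff
        intro a'
        simp [hd]
      have := Submodule.add_mem _ h1 h2
      simpa using this

lemma contraction_lemma (V : Type) [AddCommGroup V] [Module ℝ V] [FiniteDimensional ℝ V]
    (N : V →ₗ[ℝ] V) (hN : ∃ k, N ^ k = 0) :
    ∃ φ : ℝ → (V ≃ₗ[ℝ] V), ∀ (v : V) (g : V →ₗ[ℝ] ℝ),
      Tendsto (fun t => g ((φ t).symm (N (φ t v)))) atTop (nhds 0) := by
  classical
  obtain ⟨k, hk⟩ := hN
  obtain ⟨ι, _, b, d, hbd⟩ := adapted_basis k V N hk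
  -- coefficient vanishing
  have hM : ∀ j i, ¬ d i < d j → b.repr (N (b j)) i = 0 := by
    intro j i hij
    have := hbd j
    rw [Basis.mem_span_image] at this
    by_contra h
    exact hij (this (Finsupp.mem_support_iff.mpr h))
  set s : ℝ → ℝ := fun t => max t 1 with hs
  have hs1 : ∀ t, (1:ℝ) ≤ s t := fun t => le_max_right t 1
  have hs0 : ∀ t, (0:ℝ) < s t := fun t => lt_of_lt_of_le one_pos (hs1 t)
  set c : ℝ → ι → ℝ := fun t i => (s t ^ d i)⁻¹ with hc
  have hcne : ∀ t i, c t i ≠ 0 := fun t i =>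
    inv_ne_zero (pow_ne_zero _ (ne_of_gt (hs0 t)))
  set u : ℝ → (ι → ℝ) ≃ₗ[ℝ] (ι → ℝ) := fun t =>
    LinearEquiv.piCongrRight (fun i => LinearEquiv.smulOfNeZero ℝ ℝ (c t i) (hcne t i)) with hu
  set φ : ℝ → (V ≃ₗ[ℝ] V) := fun t => b.equivFun.trans ((u t).trans b.equivFun.symm) with hφ
  have e1 : ∀ t j, (φ t) (b j) = c t j • b j := by
    intro t j
    apply b.equivFun.injective
    rw [hφ]
    simp only [LinearEquiv.trans_apply, LinearEquiv.apply_symm_apply, map_smul]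
    funext i
    rw [hu]
    simp only [LinearEquiv.piCongrRight_apply, LinearEquiv.smulOfNeZero_apply,
      Basis.equivFun_self, Pi.smul_apply, smul_eq_mul]
    by_cases h : j = i <;> simp [h, mul_comm]
  have e2 : ∀ t i, (φ t).symm (b i) = (c t i)⁻¹ • b i := by
    intro t i
    rw [LinearEquiv.symm_apply_eq, map_smul, e1, smul_smul,
      inv_mul_cancel₀ (hcne t i), one_smul]
  have e3 : ∀ t j, (φ t).symm (N (b j)) =
      ∑ i, b.repr (N (b j)) i • ((c t i)⁻¹ • b i) := by
    intro t j
    conv_lhs => rw [← b.sum_repr (N (b j))]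
    rw [map_sum]
    exact Finset.sum_congr rfl fun i _ => by rw [map_smul, e2]
  have key : ∀ (v : V) (g : V →ₗ[ℝ] ℝ) (t : ℝ),
      g ((φ t).symm (N (φ t v))) =
      ∑ j, ∑ i, b.equivFun v j * (c t j * (b.repr (N (b j)) i * ((c t i)⁻¹ * g (b i)))) := by
    intro v g t
    have inner : ∀ j, g ((φ t).symm (N ((φ t) (b j)))) =
        c t j * ∑ i, b.repr (N (b j)) i * ((c t i)⁻¹ * g (b i)) := by
      intro j
      rw [e1, map_smul, map_smul, map_smul, e3, map_sum, smul_eq_mul]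
      congr 1
      refine Finset.sum_congr rfl fun i _ => ?_
      simp [smul_eq_mul, mul_assoc]
    conv_lhs => rw [← b.sum_equivFun v]
    simp only [map_sum, map_smul, smul_eq_mul]
    simp only [inner]
    simp only [Finset.mul_sum]
  refine ⟨φ, ?_⟩
  intro v g
  have hlim : ∀ j i, Tendsto
      (fun t => b.equivFun v j * (c t j * (b.repr (N (b j)) i * ((c t i)⁻¹ * g (b i)))))
      atTop (nhds 0) := by
    intro j i
    by_cases hij : d i < d j
    · have heq : (fun t => b.equivFun v j *
          (c t j * (b.repr (N (b j)) i * ((c t i)⁻¹ * g (b i))))) =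
          fun t => (b.equivFun v j * (b.repr (N (b j)) i * g (b i))) * (s t ^ (d j - d i))⁻¹ := by
        funext t
        have hsne : s t ≠ 0 := ne_of_gt (hs0 t)
        have : c t j * (c t i)⁻¹ = (s t ^ (d j - d i))⁻¹ := by
          have hsp : s t ^ d j = s t ^ (d j - d i) * s t ^ d i := by
            rw [← pow_add]; congr 1; omega
          rw [hc]
          simp only [inv_inv]
          rw [hsp, mul_inv, mul_assoc, inv_mul_cancel₀ (pow_ne_zero _ hsne), mul_one]
        calc b.equivFun v j * (c t j * (b.repr (N (b j)) i * ((c t i)⁻¹ * g (b i))))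
            = (b.equivFun v j * (b.repr (N (b j)) i * g (b i))) * (c t j * (c t i)⁻¹) := by ring
          _ = _ := by rw [this]
      rw [heq]
      have hst : Tendsto s atTop atTop :=
        tendsto_atTop_mono (fun t => le_max_left t 1) tendsto_id
      have hpow : Tendsto (fun t => s t ^ (d j - d i)) atTop atTop :=
        (tendsto_pow_atTop (by omega)).comp hst
      have := hpow.inv_tendsto_atTop
      simpa using Tendsto.const_mul (b.equivFun v j * (b.repr (N (b j)) i * g (b i))) this
    · have : b.repr (N (b j)) i = 0 := hM j i hij
      simp [this]
  have := tendsto_finset_sum (Finset.univ : Finset ι)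
    (fun j _ => tendsto_finset_sum (Finset.univ : Finset ι) (fun i _ => hlim j i))
  rw [Finset.sum_const_zero] at this
  simp only [Finset.sum_const_zero] at this
  refine Tendsto.congr ?_ this
  intro t
  rw [key]

/-- If a real Lie algebra decomposes as `[𝔤,𝔤] ⊕ ℝA` with `[𝔤,𝔤]` abelian and
`ad A` unipotent on `[𝔤,𝔤]`, then it contracts to `𝔟(n,ℝ) = ℝ^{n-1} ⋊₁ ℝ`:
there are `φ t ∈ GL(𝔤)` and a linear identification `ψ` with `ℝ^{n-1} × ℝ` such that
`φ t⁻¹ [φ t X, φ t Y] → ψ⁻¹ [ψ X, ψ Y]_{𝔟(n,ℝ)}` as `t → ∞`. -/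
theorem stmt_11 (n : ℕ) (hn : 2 ≤ n) (L : Type) [LieRing L] [LieAlgebra ℝ L]
    [FiniteDimensional ℝ L] (hdim : Module.finrank ℝ L = n)
    (A : L) (hA : A ∉ LieAlgebra.derivedSeries ℝ L 1)
    (hspan : ∀ x : L, ∃ c : ℝ, ∃ y ∈ LieAlgebra.derivedSeries ℝ L 1, x = c • A + y)
    (habel : ∀ x ∈ LieAlgebra.derivedSeries ℝ L 1,
      ∀ y ∈ LieAlgebra.derivedSeries ℝ L 1, ⁅x, y⁆ = (0 : L))
    (hunip : ∃ k : ℕ, ∀ y ∈ LieAlgebra.derivedSeries ℝ L 1,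
      (((LieAlgebra.ad ℝ L A - LinearMap.id : Module.End ℝ L)) ^ k) y = 0) :
    ∃ (φ : ℝ → (L ≃ₗ[ℝ] L)) (ψ : L ≃ₗ[ℝ] ((Fin (n - 1) → ℝ) × ℝ)),
      ∀ X Y : L, Filter.Tendsto
        (fun t : ℝ => ψ ((φ t).symm ⁅(φ t) X, (φ t) Y⁆)) Filter.atTop
        (nhds ((ψ X).2 • (ψ Y).1 - (ψ Y).2 • (ψ X).1, (0 : ℝ))) := by
  classical
  set I := LieAlgebra.derivedSeries ℝ L 1 with hI
  set S : Submodule ℝ L := (I : Submodule ℝ L) with hSdef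
  have hmemS : ∀ x : L, x ∈ S ↔ x ∈ I := fun x => Iff.rfl
  -- the splitting L ≃ S × ℝ
  set f : (S × ℝ) →ₗ[ℝ] L := S.subtype.coprod (LinearMap.toSpanSingleton ℝ L A) with hf
  have hfapp : ∀ (y : S) (c : ℝ), f (y, c) = (y : L) + c • A := by
    intro y c
    simp [hf, LinearMap.coprod_apply, LinearMap.toSpanSingleton_apply]
  have hfbij : Function.Bijective f := by
    constructor
    · rw [← LinearMap.ker_eq_bot, Submodule.eq_bot_iff]
      rintro ⟨y, c⟩ hx
      rw [LinearMap.mem_ker, hfapp] at hx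
      by_cases hc : c = 0
      · subst hc
        simp only [zero_smul, add_zero] at hx
        have : y = 0 := Subtype.ext hx
        simp [this]
      · exfalso
        apply hA
        have : A = (-c⁻¹) • (y : L) := by
          have h1 : c • A = -(y : L) := by linear_combination (norm := module) hx
          have := congrArg (fun z => c⁻¹ • z) h1
          simpa [smul_smul, inv_mul_cancel₀ hc] using this
        rw [← hmemS] at *
        rw [this]
        exact S.smul_mem _ y.2
    · intro x
      obtain ⟨c, y, hy, rfl⟩ := hspan x
      exact ⟨(⟨y, (hmemS y).mpr hy⟩, c), by rw [hfapp]; exact add_comm _ _⟩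
  set χ : (S × ℝ) ≃ₗ[ℝ] L := LinearEquiv.ofBijective f hfbij with hχ
  have hχapp : ∀ (y : S) (c : ℝ), χ (y, c) = (y : L) + c • A := fun y c => hfapp y c
  -- dimension count
  have hrank : finrank ℝ S = n - 1 := by
    have h1 : finrank ℝ (S × ℝ) = finrank ℝ L := χ.finrank_eq
    rw [Module.finrank_prod, Module.finrank_self, hdim] at h1
    omega
  set E : S ≃ₗ[ℝ] (Fin (n - 1) → ℝ) := (Module.finBasisOfFinrankEq ℝ S hrank).equivFun with hE
  -- the nilpotent operator on S
  have hres : ∀ x ∈ S, (LieAlgebra.ad ℝ L A - LinearMap.id : Module.End ℝ L) x ∈ S := by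
    intro x hx
    rw [hmemS] at hx ⊢
    apply I.sub_mem
    · exact I.lie_mem hx
    · exact hx
  set N : S →ₗ[ℝ] S :=
    (LieAlgebra.ad ℝ L A - LinearMap.id : Module.End ℝ L).restrict hres with hN
  have hNapp : ∀ z : S, ((N z : L)) = ⁅A, (z : L)⁆ - (z : L) := by
    intro z
    rw [hN, LinearMap.restrict_apply]
    simp [LieAlgebra.ad_apply]
  have hNnil : ∃ k, N ^ k = 0 := by
    obtain ⟨k, hk⟩ := hunip
    refine ⟨k, ?_⟩
    apply LinearMap.ext
    intro z
    rw [hN, Module.End.pow_restrict]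
    apply Subtype.ext
    rw [LinearMap.restrict_apply]
    exact hk z ((hmemS z).mp z.2)
  obtain ⟨φI, hφI⟩ := contraction_lemma S N hNnil
  set φ : ℝ → (L ≃ₗ[ℝ] L) := fun t =>
    (χ.symm.trans (((φI t).prodCongr (LinearEquiv.refl ℝ ℝ)).trans χ)) with hφ
  set ψ : L ≃ₗ[ℝ] ((Fin (n - 1) → ℝ) × ℝ) :=
    χ.symm.trans (E.prodCongr (LinearEquiv.refl ℝ ℝ)) with hψ
  refine ⟨φ, ψ, ?_⟩
  intro X Y
  set x : S := (χ.symm X).1 with hx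
  set cX : ℝ := (χ.symm X).2 with hcX
  set y : S := (χ.symm Y).1 with hy
  set cY : ℝ := (χ.symm Y).2 with hcY
  have hXeq : X = (x : L) + cX • A := by
    conv_lhs => rw [← χ.apply_symm_apply X]
    rw [show χ.symm X = (x, cX) from rfl, hχapp]
  have hYeq : Y = (y : L) + cY • A := by
    conv_lhs => rw [← χ.apply_symm_apply Y]
    rw [show χ.symm Y = (y, cY) from rfl, hχapp]
  have hφX : ∀ t, (φ t) X = ((φI t x : S) : L) + cX • A := by
    intro t
    rw [hφ]
    simp only [LinearEquiv.trans_apply]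
    rw [show χ.symm X = (x, cX) from rfl]
    rw [show ((φI t).prodCongr (LinearEquiv.refl ℝ ℝ)) (x, cX) = (φI t x, cX) from rfl]
    exact hχapp _ _
  have hφY : ∀ t, (φ t) Y = ((φI t y : S) : L) + cY • A := by
    intro t
    rw [hφ]
    simp only [LinearEquiv.trans_apply]
    rw [show χ.symm Y = (y, cY) from rfl]
    rw [show ((φI t).prodCongr (LinearEquiv.refl ℝ ℝ)) (y, cY) = (φI t y, cY) from rfl]
    exact hχapp _ _
  -- bracket formula
  have hlieA : ∀ z : S, ⁅A, (z : L)⁆ = ((z + N z : S) : L) := by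
    intro z
    rw [Submodule.coe_add, hNapp]
    abel
  have hbrk : ∀ t, ⁅(φ t) X, (φ t) Y⁆ =
      ((cX • (φI t y + N (φI t y)) - cY • (φI t x + N (φI t x)) : S) : L) := by
    intro t
    rw [hφX, hφY]
    have h00 : ⁅((φI t x : S) : L), ((φI t y : S) : L)⁆ = 0 :=
      habel _ ((hmemS _).mp (φI t x).2) _ ((hmemS _).mp (φI t y).2)
    have h1 : ⁅A, ((φI t y : S) : L)⁆ = ((φI t y + N (φI t y) : S) : L) := hlieA _
    have h2 : ⁅A, ((φI t x : S) : L)⁆ = ((φI t x + N (φI t x) : S) : L) := hlieA _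
    simp only [lie_add, add_lie, smul_lie, lie_smul, lie_self, smul_zero, h00, zero_add,
      add_zero]
    rw [← lie_skew ((φI t x : S) : L) A, h1, h2]
    simp only [Submodule.coe_sub, Submodule.coe_smul, smul_neg]
    module
  have hχcoe : ∀ z : S, χ.symm (z : L) = (z, 0) := by
    intro z
    rw [LinearEquiv.symm_apply_eq, hχapp]
    simp
  have hφS : ∀ (t) (z : S), (φ t) (z : L) = ((φI t z : S) : L) := by
    intro t z
    rw [hφ]
    simp only [LinearEquiv.trans_apply, hχcoe]
    rw [show ((φI t).prodCongr (LinearEquiv.refl ℝ ℝ)) (z, 0) = (φI t z, 0) from rfl, hχapp]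
    simp
  have hstep : ∀ (t) (w : S), (φ t).symm (w : L) = (((φI t).symm w : S) : L) := by
    intro t w
    rw [LinearEquiv.symm_apply_eq, hφS, LinearEquiv.apply_symm_apply]
  have hψS : ∀ z : S, ψ (z : L) = (E z, 0) := by
    intro z
    rw [hψ]
    simp only [LinearEquiv.trans_apply, hχcoe]
    rfl
  have hψX : ψ X = (E x, cX) := by
    rw [hψ]
    simp only [LinearEquiv.trans_apply]
    rw [show χ.symm X = (x, cX) from rfl]
    rfl
  have hψY : ψ Y = (E y, cY) := by
    rw [hψ]
    simp only [LinearEquiv.trans_apply]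
    rw [show χ.symm Y = (y, cY) from rfl]
    rfl
  have hpt : ∀ t, ψ ((φ t).symm ⁅(φ t) X, (φ t) Y⁆) =
      ((cX • E y - cY • E x) +
        (cX • E ((φI t).symm (N (φI t y))) - cY • E ((φI t).symm (N (φI t x)))), 0) := by
    intro t
    rw [hbrk, hstep, hψS]
    refine Prod.ext ?_ rfl
    show E ((φI t).symm (cX • (φI t y + N (φI t y)) - cY • (φI t x + N (φI t x)))) = _
    rw [map_sub, map_smul, map_smul, map_add, map_add, LinearEquiv.symm_apply_apply,
      LinearEquiv.symm_apply_apply]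
    simp only [map_sub, map_smul, map_add]
    module
  have hG : ∀ z : S, Tendsto (fun t => E ((φI t).symm (N (φI t z)))) atTop
      (nhds (0 : Fin (n - 1) → ℝ)) := by
    intro z
    rw [tendsto_pi_nhds]
    intro i
    have := hφI z ((LinearMap.proj i).comp E.toLinearMap)
    simpa using this
  have h1 : Tendsto (fun t => cX • E ((φI t).symm (N (φI t y))) -
      cY • E ((φI t).symm (N (φI t x)))) atTop (nhds 0) := by
    simpa using ((hG y).const_smul cX).sub ((hG x).const_smul cY)
  have h2 : Tendsto (fun t => (cX • E y - cY • E x) +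
      (cX • E ((φI t).symm (N (φI t y))) - cY • E ((φI t).symm (N (φI t x)))))
      atTop (nhds (cX • E y - cY • E x)) := by
    have := tendsto_const_nhds (x := cX • E y - cY • E x) (f := atTop (α := ℝ))
    simpa using this.add h1
  have h3 := h2.prodMk_nhds (tendsto_const_nhds (x := (0:ℝ)) (f := atTop (α := ℝ)))
  rw [hψX, hψY]
  refine Tendsto.congr (fun t => (hpt t).symm) ?_
  simpa using h3
end

section
/- Let 𝔤₀ be a real Lie algebra, 𝔱 an abelian Lie algebra of semisimple derivations of 𝔤₀, and τ : 𝔤₀ → 𝔱 a linear map whose graph 𝔤 = {X + τ(X) : X ∈ 𝔤₀} is a Lie subalgebra of 𝔤₀ ⋊ 𝔱 satisfying [𝔤, τ(𝔤₀)] ⊆ 𝔤 (a twisting; this forces τ to be a Lie algebra homomorphism vanishing on brackets appropriately). Define ω_τ(X ∧ Y) = [τ(X), Y] + [X, τ(Y)] for X, Y ∈ 𝔤₀. Then ω_τ is a 2-cocycle in the Chevalley–Eilenberg complex of 𝔤₀ with values in the adjoint module: d'ω_τ = 0. -/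
/-- For a twisting map `τ` (valued in an abelian algebra of semisimple derivations,
vanishing on brackets and on its own images), the 2-form
`ω_τ(X,Y) = [τ(X),Y] + [X,τ(Y)] = τ(X)·Y − τ(Y)·X` is a Chevalley–Eilenberg 2-cocycle
with values in the adjoint module: `d'ω_τ = 0`. -/
theorem stmt_14 (L : Type) [LieRing L] [LieAlgebra ℝ L]
    (τ : L →ₗ[ℝ] (L →ₗ[ℝ] L))
    (hder : ∀ X Y Z : L, τ X ⁅Y, Z⁆ = ⁅τ X Y, Z⁆ + ⁅Y, τ X Z⁆)
    (habel : ∀ X Y Z : L, τ X (τ Y Z) = τ Y (τ X Z))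
    (hss : ∀ X : L, Module.End.IsSemisimple (τ X : Module.End ℝ L))
    (hhom : ∀ X Y : L, τ ⁅X, Y⁆ = 0)
    (htwist : ∀ X Y : L, τ (τ X Y) = 0) :
    ∀ X Y Z : L,
      ⁅X, τ Y Z - τ Z Y⁆ + ⁅Y, τ Z X - τ X Z⁆ + ⁅Z, τ X Y - τ Y X⁆
        - (τ ⁅X, Y⁆ Z - τ Z ⁅X, Y⁆)
        - (τ ⁅Z, X⁆ Y - τ Y ⁅Z, X⁆)
        - (τ ⁅Y, Z⁆ X - τ X ⁅Y, Z⁆) = 0 := by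
  intro X Y Z
  simp only [hhom, hder, LinearMap.zero_apply, lie_sub]
  rw [← lie_skew (τ Z X) Y, ← lie_skew (τ Y Z) X, ← lie_skew (τ X Y) Z]
  abel
end

section
/- Define μ + ω_τ/t on the underlying vector space of 𝔤₀ (with μ the bracket of 𝔤₀ and ω_τ as above). Then λ(1) = μ + ω_τ is a Lie bracket isomorphic to the twisting 𝔤 (as the graph of τ in 𝔤₀ ⋊ 𝔱), and λ(t) = μ + ω_τ/t is a Lie bracket for all t ≠ 0. -/
/-- The linear expansion `λ(t) = μ + ω_τ / t` of the twisting cocycle: `λ(t)` is a Lie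
bracket for every `t ≠ 0`, and `X ↦ (X, τ X)` identifies `λ(1)` with the bracket of the
graph of `τ` inside the semidirect product `𝔤₀ ⋊ 𝔱` (whose bracket on pairs is
`[(x,f),(y,g)] = ([x,y] + f y − g x, f∘g − g∘f)`). -/
theorem stmt_15 (L : Type) [LieRing L] [LieAlgebra ℝ L]
    (τ : L →ₗ[ℝ] (L →ₗ[ℝ] L))
    (hder : ∀ X Y Z : L, τ X ⁅Y, Z⁆ = ⁅τ X Y, Z⁆ + ⁅Y, τ X Z⁆)
    (habel : ∀ X Y Z : L, τ X (τ Y Z) = τ Y (τ X Z))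
    (hhom : ∀ X Y : L, τ ⁅X, Y⁆ = 0)
    (htwist : ∀ X Y : L, τ (τ X Y) = 0) :
    let lam : ℝ → L → L → L := fun t X Y => ⁅X, Y⁆ + (1 / t) • (τ X Y - τ Y X)
    (∀ t : ℝ, t ≠ 0 →
      (∀ X : L, lam t X X = 0) ∧
      (∀ X Y : L, lam t X Y = -lam t Y X) ∧
      (∀ X Y Z : L,
        lam t (lam t X Y) Z + lam t (lam t Y Z) X + lam t (lam t Z X) Y = 0)) ∧
    (∀ X Y : L,
      (⁅X, Y⁆ + τ X Y - τ Y X, τ X ∘ₗ τ Y - τ Y ∘ₗ τ X)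
        = (lam 1 X Y, τ (lam 1 X Y))) := by
  intro lam
  constructor
  · intro t ht
    refine ⟨?_, ?_, ?_⟩
    · intro X; simp [lam]
    · intro X Y
      simp only [lam]
      rw [← lie_skew Y X]
      module
    · intro X Y Z
      simp only [lam, map_add, map_sub, map_smul, hhom, htwist, LinearMap.add_apply,
        LinearMap.sub_apply, LinearMap.smul_apply, LinearMap.zero_apply,
        sub_self, smul_zero, add_zero, zero_add, zero_sub, sub_zero,
        add_lie, sub_lie, smul_lie, lie_add, lie_sub, lie_smul, smul_add, smul_sub, smul_neg]
      have hJ := eq_neg_of_add_eq_zero_right (lie_jacobi X Y Z)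
      rw [hder Z X Y, hder X Y Z, hder Y Z X,
        habel Z X Y, habel Z Y X, habel X Y Z,
        lie_lie, lie_lie, lie_lie,
        ← lie_skew X (τ Z Y), ← lie_skew Y (τ X Z), ← lie_skew Z (τ Y X),
        ← lie_skew X Z, ← lie_skew Y X, ← lie_skew Z Y]
      simp only [lie_neg, smul_neg, neg_neg]
      rw [hJ]
      module
  · intro X Y
    have h1 : lam 1 X Y = ⁅X, Y⁆ + τ X Y - τ Y X := by
      simp [lam, add_sub_assoc]
    have h2 : τ (lam 1 X Y) = 0 := by
      simp only [lam, map_add, map_sub, map_smul, hhom, htwist, sub_self, smul_zero, add_zero]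
    refine Prod.ext ?_ ?_
    · simpa using h1.symm
    · simp only [h1.symm, h2]
      ext Z
      simp [habel X Y Z]
end

section
/- Assume the four exponentials conjecture. Let p, q, p', q' be integers with p, p' ≥ 5 and q, q' ≥ 3, and suppose 1 + log(q−1)/arccosh((p−2)/2) = 1 + log(q'−1)/arccosh((p'−2)/2). Then there exist positive integers M, N such that (q−1)^N = (q'−1)^M and T_N((p−2)/2) = T_M((p'−2)/2), where T_k is the k-th Chebyshev polynomial of the first kind. -/
/-- `arccosh x = log (x + √(x² − 1))`. -/
noncomputable def arccosh (x : ℝ) : ℝ := Real.log (x + Real.sqrt (x ^ 2 - 1))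

/-- The four exponentials conjecture: if `β₁, β₂` are `ℚ`-linearly independent and
`z₁, z₂` are `ℚ`-linearly independent complex numbers, then at least one of the four
numbers `e^{βᵢ zⱼ}` is transcendental. -/
def FourExponentialsConjecture : Prop :=
  ∀ β₁ β₂ z₁ z₂ : ℂ,
    LinearIndependent ℚ ![β₁, β₂] → LinearIndependent ℚ ![z₁, z₂] →
      (Transcendental ℚ (Complex.exp (β₁ * z₁)) ∨
        Transcendental ℚ (Complex.exp (β₁ * z₂)) ∨
        Transcendental ℚ (Complex.exp (β₂ * z₁)) ∨
        Transcendental ℚ (Complex.exp (β₂ * z₂)))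

noncomputable def lam (c : ℕ) : ℝ := (c:ℝ)/2 + Real.sqrt (((c:ℝ)/2)^2 - 1)



lemma s_sq {c : ℕ} (hc : 3 ≤ c) :
    (Real.sqrt (((c:ℝ)/2)^2 - 1))^2 = ((c:ℝ)/2)^2 - 1 := by
  have h3 : (3:ℝ) ≤ c := by exact_mod_cast hc
  apply Real.sq_sqrt; nlinarith

lemma s_pos {c : ℕ} (hc : 3 ≤ c) : 0 < Real.sqrt (((c:ℝ)/2)^2 - 1) := by
  have h3 : (3:ℝ) ≤ c := by exact_mod_cast hc
  apply Real.sqrt_pos.2; nlinarith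

lemma lam_gt_one {c : ℕ} (hc : 3 ≤ c) : 1 < lam c := by
  have h3 : (3:ℝ) ≤ c := by exact_mod_cast hc
  have := s_pos hc
  unfold lam; nlinarith

lemma arccosh_eq (c : ℕ) : arccosh ((c:ℝ)/2) = Real.log (lam c) := rfl

lemma exp_arccosh {c : ℕ} (hc : 3 ≤ c) : Real.exp (arccosh ((c:ℝ)/2)) = lam c := by
  rw [arccosh_eq, Real.exp_log (lt_trans one_pos (lam_gt_one hc))]

lemma arccosh_pos {c : ℕ} (hc : 3 ≤ c) : 0 < arccosh ((c:ℝ)/2) := by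
  rw [arccosh_eq]; exact Real.log_pos (lam_gt_one hc)

lemma lam_inv {c : ℕ} (hc : 3 ≤ c) :
    (lam c)⁻¹ = (c:ℝ)/2 - Real.sqrt (((c:ℝ)/2)^2 - 1) := by
  have hs := s_sq hc
  apply inv_eq_of_mul_eq_one_right
  unfold lam; nlinarith

lemma cosh_arccosh {c : ℕ} (hc : 3 ≤ c) : Real.cosh (arccosh ((c:ℝ)/2)) = (c:ℝ)/2 := by
  have hlpos : 0 < lam c := lt_trans one_pos (lam_gt_one hc)
  rw [arccosh_eq, Real.cosh_eq, Real.exp_log hlpos, Real.exp_neg, Real.exp_log hlpos,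
    lam_inv hc]
  unfold lam; ring

lemma s_irr {c : ℕ} (hc : 3 ≤ c) : Irrational (Real.sqrt (((c:ℝ)/2)^2 - 1)) := by
  have h4 : (4:ℕ) ≤ c^2 := by nlinarith
  have key : Irrational (Real.sqrt ((c:ℝ)^2 - 4)) := by
    have hcast : ((c:ℝ)^2 - 4) = ((c^2 - 4 : ℕ) : ℝ) := by push_cast [h4]; ring
    rw [hcast, irrational_sqrt_natCast_iff]
    rintro ⟨d, hd⟩
    have hd' : c^2 = d*d + 4 := by omega
    have hdc : d < c := by nlinarith
    have h1 : d + 1 ≤ c := hdc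
    have h2 : (d+1)^2 ≤ c^2 := Nat.pow_le_pow_left h1 2
    nlinarith
  have heq2 : Real.sqrt (((c:ℝ)/2)^2 - 1) = Real.sqrt ((c:ℝ)^2 - 4) / 2 := by
    rw [show ((c:ℝ)/2)^2 - 1 = ((c:ℝ)^2 - 4)/4 by ring]
    have h3 : (3:ℝ) ≤ c := by exact_mod_cast hc
    rw [Real.sqrt_div (by nlinarith), show (4:ℝ) = 2^2 by norm_num, Real.sqrt_sq (by norm_num)]
  rw [heq2]
  exact_mod_cast key.div_natCast (m := 2) (by norm_num)
lemma lam_pow {c : ℕ} (hc : 3 ≤ c) (k : ℕ) (hk : 1 ≤ k) :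
    ∃ A B : ℚ, 0 < A ∧ 0 < B ∧
      lam c ^ k = (A:ℝ) + (B:ℝ) * Real.sqrt (((c:ℝ)/2)^2 - 1) := by
  have h3 : (3:ℝ) ≤ c := by exact_mod_cast hc
  have h3q : (3:ℚ) ≤ c := by exact_mod_cast hc
  have hs := s_sq hc
  induction k with
  | zero => omega
  | succ n ih =>
    rcases Nat.eq_or_lt_of_le hk with h1 | h1
    · refine ⟨(c:ℚ)/2, 1, by positivity, one_pos, ?_⟩
      rw [← h1]; unfold lam; push_cast; ring
    · obtain ⟨A, B, hA, hB, hrec⟩ := ih (by omega)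
      have hx2 : (0:ℚ) < ((c:ℚ)/2)^2 - 1 := by nlinarith
      have hx0 : (0:ℚ) < (c:ℚ)/2 := by nlinarith
      refine ⟨A*(c/2) + B*((c/2)^2 - 1), A + B*(c/2),
        by nlinarith [mul_pos hB hx2, mul_pos hA hx0],
        by nlinarith [mul_pos hB hx0], ?_⟩
      rw [pow_succ, hrec]
      unfold lam
      push_cast
      linear_combination (B:ℝ) * hs

lemma lam_pow_not_rat {c : ℕ} (hc : 3 ≤ c) (k : ℕ) (hk : 1 ≤ k) (r : ℚ) :
    lam c ^ k ≠ (r:ℝ) := by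
  obtain ⟨A, B, hA, hB, hrec⟩ := lam_pow hc k hk
  intro h
  have : Real.sqrt (((c:ℝ)/2)^2 - 1) = (((r - A)/B : ℚ) : ℝ) := by
    have hB0 : (B:ℝ) ≠ 0 := by exact_mod_cast hB.ne'
    rw [hrec] at h
    push_cast
    rw [eq_div_iff hB0]
    linarith
  exact s_irr hc ⟨_, this.symm⟩

lemma lam_alg {c : ℕ} (hc : 3 ≤ c) : IsAlgebraic ℚ ((lam c : ℝ) : ℂ) := by
  have hs := s_sq hc
  refine ⟨Polynomial.X^2 - Polynomial.C (c:ℚ) * Polynomial.X + 1, ?_, ?_⟩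
  · intro h
    have := congrArg (Polynomial.coeff · 2) h
    simp [Polynomial.coeff_one] at this
  · have hre : lam c ^ 2 - (c:ℝ) * lam c + 1 = 0 := by unfold lam; nlinarith
    have : ((lam c : ℝ) : ℂ)^2 - (c:ℂ) * ((lam c : ℝ):ℂ) + 1 = 0 := by
      exact_mod_cast congrArg (Complex.ofReal ·) hre
    simp only [map_add, map_sub, map_pow, map_mul, map_one, Polynomial.aeval_X,
      Polynomial.aeval_C, map_natCast]
    exact this

lemma rat_alg (r : ℚ) : IsAlgebraic ℚ ((r:ℂ)) := by
  refine ⟨Polynomial.X - Polynomial.C r, ?_, by simp⟩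
  exact Polynomial.X_sub_C_ne_zero r

lemma nat_alg (n : ℕ) : IsAlgebraic ℚ ((n:ℂ)) := by
  have := rat_alg (n:ℚ)
  simpa using this

lemma indep_logs {c d : ℕ} (hc : 3 ≤ c) (hd : 2 ≤ d) :
    LinearIndependent ℚ ![((Real.log d : ℝ) : ℂ), ((Real.log (lam c) : ℝ) : ℂ)] := by
  have hLq : 0 < Real.log d := Real.log_pos (by exact_mod_cast hd)
  have hLa : 0 < Real.log (lam c) := Real.log_pos (lam_gt_one hc)
  rw [LinearIndependent.pair_iff]
  intro s t hst
  by_contra hcon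
  have hre : (s:ℝ) * Real.log d + (t:ℝ) * Real.log (lam c) = 0 := by
    have : ((s:ℝ) * Real.log d + (t:ℝ) * Real.log (lam c) : ℂ) = 0 := by
      push_cast
      rw [Rat.smul_def, Rat.smul_def] at hst
      convert hst using 2 <;> push_cast <;> ring
    exact_mod_cast this
  have key : ∀ u v : ℚ, 0 < u → 0 < v →
      (u:ℝ) * Real.log d = (v:ℝ) * Real.log (lam c) → False := by
    intro u v hu hv huv
    set m : ℕ := u.num.toNat * v.den with hm
    set k : ℕ := v.num.toNat * u.den with hk
    have hunum : (0:ℤ) < u.num := Rat.num_pos.2 hu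
    have hvnum : (0:ℤ) < v.num := Rat.num_pos.2 hv
    have hm1 : 1 ≤ m := by
      rw [hm]; exact Nat.mul_pos (by omega) v.pos
    have hk1 : 1 ≤ k := by
      rw [hk]; exact Nat.mul_pos (by omega) u.pos
    have hcastu : (u:ℝ) = (u.num:ℝ) / (u.den:ℝ) := Rat.cast_def u
    have hcastv : (v:ℝ) = (v.num:ℝ) / (v.den:ℝ) := Rat.cast_def v
    have hud : (0:ℝ) < u.den := by exact_mod_cast u.pos
    have hvd : (0:ℝ) < v.den := by exact_mod_cast v.pos
    have hmc : (m:ℝ) = (u.num:ℝ) * v.den := by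
      have h1 : ((u.num.toNat : ℤ) : ℝ) = (u.num : ℝ) := by
        exact_mod_cast Int.toNat_of_nonneg hunum.le
      rw [hm]; push_cast [← h1]; ring
    have hkc : (k:ℝ) = (v.num:ℝ) * u.den := by
      have h1 : ((v.num.toNat : ℤ) : ℝ) = (v.num : ℝ) := by
        exact_mod_cast Int.toNat_of_nonneg hvnum.le
      rw [hk]; push_cast [← h1]; ring
    have hmk : (m:ℝ) * Real.log d = (k:ℝ) * Real.log (lam c) := by
      rw [hmc, hkc]
      rw [hcastu, hcastv] at huv
      field_simp at huv
      nlinarith [huv]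
    have hexp : (d:ℝ)^m = lam c ^ k := by
      have h1 : Real.exp ((m:ℝ) * Real.log d) = (d:ℝ)^m := by
        rw [Real.exp_nat_mul, Real.exp_log (by positivity : (0:ℝ) < d)]
      have h2 : Real.exp ((k:ℝ) * Real.log (lam c)) = lam c ^ k := by
        rw [Real.exp_nat_mul, Real.exp_log (lt_trans one_pos (lam_gt_one hc))]
      rw [← h1, ← h2, hmk]
    exact lam_pow_not_rat hc k hk1 ((d:ℚ)^m) (by rw [← hexp]; push_cast; ring)
  rcases eq_or_ne s 0 with rfl | hs0
  · have ht0 : t = 0 := by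
      have h0 : (t:ℝ) * Real.log (lam c) = 0 := by push_cast at hre; linarith
      rcases mul_eq_zero.1 h0 with h | h
      · exact_mod_cast h
      · exact absurd h hLa.ne'
    exact hcon ⟨rfl, ht0⟩
  rcases eq_or_ne t 0 with rfl | ht0
  · have hs0' : s = 0 := by
      have h0 : (s:ℝ) * Real.log d = 0 := by push_cast at hre; linarith
      rcases mul_eq_zero.1 h0 with h | h
      · exact_mod_cast h
      · exact absurd h hLq.ne'
    exact hcon ⟨hs0', rfl⟩
  rcases lt_or_gt_of_ne hs0 with hs | hs
  · have hsr : (s:ℝ) < 0 := by exact_mod_cast hs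
    have htr : 0 < (t:ℝ) := by nlinarith
    exact key (-s) t (by linarith) (by exact_mod_cast htr) (by push_cast; linarith)
  · have hsr : (0:ℝ) < s := by exact_mod_cast hs
    have htr : (t:ℝ) < 0 := by nlinarith
    have htq : t < 0 := by exact_mod_cast htr
    exact key s (-t) hs (by linarith) (by push_cast; linarith)

lemma indep_one {z : ℝ} (hz : ∀ r : ℚ, z ≠ (r:ℝ)) :
    LinearIndependent ℚ ![(1 : ℂ), ((z:ℝ) : ℂ)] := by
  rw [LinearIndependent.pair_iff]
  intro s t hst
  have hre : (s:ℝ) + (t:ℝ) * z = 0 := by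
    have : ((s:ℝ) + (t:ℝ) * z : ℂ) = 0 := by
      push_cast
      rw [Rat.smul_def, Rat.smul_def] at hst
      convert hst using 2 <;> push_cast <;> ring
    exact_mod_cast this
  rcases eq_or_ne t 0 with rfl | ht
  · refine ⟨?_, rfl⟩
    have : (s:ℝ) = 0 := by push_cast at hre; linarith
    exact_mod_cast this
  · exfalso
    apply hz (-s/t)
    have ht' : (t:ℝ) ≠ 0 := by exact_mod_cast ht
    push_cast
    field_simp
    linarith
lemma aux_cheb (n : ℤ) (a : ℝ) :
    (Polynomial.Chebyshev.T ℝ n).eval (Real.cosh a) = Real.cosh (n * a) := by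
  have h := Polynomial.Chebyshev.T_complex_cos ((a:ℂ) * Complex.I) n
  apply Complex.ofReal_injective
  rw [Polynomial.Chebyshev.complex_ofReal_eval_T]
  rw [Complex.ofReal_cosh, ← Complex.cos_mul_I, h, Complex.ofReal_cosh, ← Complex.cos_mul_I]
  push_cast
  ring_nf


/-- Conditionally on the four exponentials conjecture: if the conformal dimensions
`1 + log(q−1)/arccosh((p−2)/2)` and `1 + log(q'−1)/arccosh((p'−2)/2)` of the boundaries
of the buildings `I_{p,q}` and `I_{p',q'}` agree, then there exist positive integers
`M, N` with `(q−1)^N = (q'−1)^M` and `T_N((p−2)/2) = T_M((p'−2)/2)`. -/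
theorem stmt_16 (hconj : FourExponentialsConjecture)
    (p q p' q' : ℕ) (hp : 5 ≤ p) (hp' : 5 ≤ p') (hq : 3 ≤ q) (hq' : 3 ≤ q')
    (heq : 1 + Real.log ((q : ℝ) - 1) / arccosh (((p : ℝ) - 2) / 2)
        = 1 + Real.log ((q' : ℝ) - 1) / arccosh (((p' : ℝ) - 2) / 2)) :
    ∃ M N : ℕ, 0 < M ∧ 0 < N ∧
      ((q : ℝ) - 1) ^ N = ((q' : ℝ) - 1) ^ M ∧
      Polynomial.eval (((p : ℝ) - 2) / 2) (Polynomial.Chebyshev.T ℝ N)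
        = Polynomial.eval (((p' : ℝ) - 2) / 2) (Polynomial.Chebyshev.T ℝ M) := by
  set c := p - 2 with hcdef
  set c' := p' - 2 with hc'def
  set d := q - 1 with hddef
  set d' := q' - 1 with hd'def
  have hc : 3 ≤ c := by omega
  have hc' : 3 ≤ c' := by omega
  have hd : 2 ≤ d := by omega
  have hd' : 2 ≤ d' := by omega
  have hcR : ((c:ℝ)) = (p:ℝ) - 2 := by
    rw [hcdef]; push_cast [Nat.cast_sub (show 2 ≤ p by omega)]; ring
  have hc'R : ((c':ℝ)) = (p':ℝ) - 2 := by
    rw [hc'def]; push_cast [Nat.cast_sub (show 2 ≤ p' by omega)]; ring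
  have hdR : ((d:ℝ)) = (q:ℝ) - 1 := by
    rw [hddef]; push_cast [Nat.cast_sub (show 1 ≤ q by omega)]; ring
  have hd'R : ((d':ℝ)) = (q':ℝ) - 1 := by
    rw [hd'def]; push_cast [Nat.cast_sub (show 1 ≤ q' by omega)]; ring
  set a := arccosh ((c:ℝ)/2) with hadef
  set a' := arccosh ((c':ℝ)/2) with ha'def
  set L := Real.log (d:ℝ) with hLdef
  set L' := Real.log (d':ℝ) with hL'def
  have ha : 0 < a := arccosh_pos hc
  have ha' : 0 < a' := arccosh_pos hc'
  have hL : 0 < L := by rw [hLdef]; exact Real.log_pos (by exact_mod_cast hd)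
  have hL' : 0 < L' := by rw [hL'def]; exact Real.log_pos (by exact_mod_cast hd')
  have heq' : L / a = L' / a' := by
    have h1 : ((p:ℝ) - 2)/2 = (c:ℝ)/2 := by rw [hcR]
    have h2 : ((p':ℝ) - 2)/2 = (c':ℝ)/2 := by rw [hc'R]
    rw [h1, h2, ← hdR, ← hd'R, ← hadef, ← ha'def, ← hLdef, ← hL'def] at heq
    linarith
  have hcross : L * a' = L' * a := by
    rw [div_eq_div_iff ha.ne' ha'.ne'] at heq'; linarith
  set z := L' / L with hzdef
  have hz_L : z * L = L' := by rw [hzdef]; field_simp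
  have hz_a : z * a = a' := by
    rw [hzdef]; rw [div_mul_eq_mul_div, eq_comm, eq_div_iff hL.ne']; linarith
  by_cases hrat : ∃ r : ℚ, z = (r:ℝ)
  · obtain ⟨r, hr⟩ := hrat
    have hzpos : 0 < z := div_pos hL' hL
    have hrpos : 0 < r := by rw [hr] at hzpos; exact_mod_cast hzpos
    have hrnum : (0:ℤ) < r.num := Rat.num_pos.2 hrpos
    refine ⟨r.den, r.num.toNat, r.pos, by omega, ?_, ?_⟩
    · -- (q-1)^N = (q'-1)^M
      have hNR : ((r.num.toNat : ℕ) : ℝ) = (r.num : ℝ) := by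
        exact_mod_cast Int.toNat_of_nonneg hrnum.le
      have hrcast : (r:ℝ) = (r.num:ℝ)/(r.den:ℝ) := Rat.cast_def r
      have hden : (0:ℝ) < (r.den:ℝ) := by exact_mod_cast r.pos
      have key1 : ((r.den:ℕ):ℝ) * L' = (r.num:ℝ) * L := by
        rw [← hz_L, hr, hrcast]; field_simp
      have e1 : ((q:ℝ) - 1) ^ (r.num.toNat) = Real.exp ((r.num.toNat : ℝ) * L) := by
        rw [Real.exp_nat_mul, hLdef, Real.exp_log (by positivity : (0:ℝ) < d), hdR]
      have e2 : ((q':ℝ) - 1) ^ (r.den) = Real.exp ((r.den : ℝ) * L') := by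
        rw [Real.exp_nat_mul, hL'def, Real.exp_log (by positivity : (0:ℝ) < d'), hd'R]
      rw [e1, e2, key1, hNR]
    · -- Chebyshev
      have hNR : ((r.num.toNat : ℕ) : ℝ) = (r.num : ℝ) := by
        exact_mod_cast Int.toNat_of_nonneg hrnum.le
      have hrcast : (r:ℝ) = (r.num:ℝ)/(r.den:ℝ) := Rat.cast_def r
      have hden : (0:ℝ) < (r.den:ℝ) := by exact_mod_cast r.pos
      have key2 : ((r.den:ℕ):ℝ) * a' = (r.num:ℝ) * a := by
        rw [← hz_a, hr, hrcast]; field_simp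
      have h1 : ((p:ℝ) - 2)/2 = Real.cosh a := by rw [hadef, cosh_arccosh hc, hcR]
      have h2 : ((p':ℝ) - 2)/2 = Real.cosh a' := by rw [ha'def, cosh_arccosh hc', hc'R]
      rw [h1, h2, aux_cheb, aux_cheb]
      rw [show (((r.num.toNat : ℕ) : ℤ) : ℝ) = ((r.num.toNat : ℕ) : ℝ) by push_cast; ring,
        show (((r.den : ℕ) : ℤ) : ℝ) = ((r.den : ℕ) : ℝ) by push_cast; ring,
        hNR, key2]
  · exfalso
    push_neg at hrat
    have h1 := indep_one hrat
    have h2 : LinearIndependent ℚ ![((L:ℝ):ℂ), ((a:ℝ):ℂ)] := by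
      rw [hLdef, hadef, arccosh_eq]
      exact indep_logs hc hd
    rcases hconj 1 (z:ℂ) ((L:ℝ):ℂ) ((a:ℝ):ℂ) h1 h2 with h | h | h | h
    · apply h
      rw [one_mul, ← Complex.ofReal_exp, hLdef, Real.exp_log (by positivity : (0:ℝ) < d)]
      exact_mod_cast nat_alg d
    · apply h
      rw [one_mul, ← Complex.ofReal_exp, hadef, exp_arccosh hc]
      exact lam_alg hc
    · apply h
      rw [show ((z:ℝ):ℂ) * ((L:ℝ):ℂ) = (((z * L : ℝ)):ℂ) by push_cast; ring, hz_L,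
        ← Complex.ofReal_exp, hL'def, Real.exp_log (by positivity : (0:ℝ) < d')]
      exact_mod_cast nat_alg d'
    · apply h
      rw [show ((z:ℝ):ℂ) * ((a:ℝ):ℂ) = (((z * a : ℝ)):ℂ) by push_cast; ring, hz_a,
        ← Complex.ofReal_exp, ha'def, exp_arccosh hc']
      exact lam_alg hc'
end

section
/- Let S = ℝ^{n−1} ⋊_α ℝ be a solvable Lie group where α ∈ 𝔤𝔩(n−1,ℝ) has all eigenvalues with real part 1. For the left-invariant metric on the Lie algebra 𝔰 = ℝ^{n−1} ⊕ ℝT (with ad_T = α) making a chosen basis orthonormal, decompose ad_T = D + S with D symmetric and S skew-symmetric, and set N = D² + [D,S]. Then the sectional curvature of any 2-plane π = span(u, v) with v ∈ [𝔰,𝔰] = ℝ^{n−1} is sec(π) = (⟨−D u̲, u̲⟩⟨D v, v⟩ + ⟨D u̲, v⟩² − ⟨u,T⟩²⟨v, N v⟩)/(⟨u,u⟩⟨v,v⟩ − ⟨u,v⟩²), where u̲ denotes the orthogonal projection of u onto ℝ^{n−1}. In particular, if D = I and N = I then sec(π) = −1. -/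
open scoped RealInnerProductSpace

/-- Curvature formula for the metric Lie algebra `𝔰 = ℝ^{n−1} ⋊ ℝT`: with `R` given by
the Heintze–Eberlein–Heber formula, the sectional curvature of a plane `span(u,v)` with
`v ∈ W = [𝔰,𝔰]` is
`(⟨−Du̲,u̲⟩⟨Dv,v⟩ + ⟨Du̲,v⟩² − ⟨u,T⟩²⟨v,Nv⟩) / (⟨u,u⟩⟨v,v⟩ − ⟨u,v⟩²)`;
in particular it equals `−1` when `D` and `N` restrict to the identity on `W`. -/
theorem stmt_18 (E : Type) [NormedAddCommGroup E] [InnerProductSpace ℝ E]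
    (W : Submodule ℝ E) (T : E)
    (hT : ⟪T, T⟫ = 1) (hTW : ∀ w ∈ W, ⟪T, w⟫ = 0)
    (P : E →ₗ[ℝ] E) (hPW : ∀ x : E, P x ∈ W)
    (hPfix : ∀ w ∈ W, P w = w)
    (hdecomp : ∀ x : E, x = P x + ⟪x, T⟫ • T)
    (D N : E →ₗ[ℝ] E)
    (hDsym : ∀ x y : E, ⟪D x, y⟫ = ⟪x, D y⟫)
    (hDW : ∀ x : E, D x ∈ W) :
    let Rm : E → E → E → E := fun X Y Z =>
      (-⟪D (P Y), Z⟫) • D (P X) + ⟪D (P X), Z⟫ • D (P Y)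
        - ⟪P Z, ⟪X, T⟫ • N (P Y) - ⟪Y, T⟫ • N (P X)⟫ • T
        + ⟪Z, T⟫ • (⟪X, T⟫ • N (P Y) - ⟪Y, T⟫ • N (P X))
    (∀ u v : E, v ∈ W →
      ⟪Rm u v v, u⟫ / (⟪u, u⟫ * ⟪v, v⟫ - ⟪u, v⟫ ^ 2)
        = (⟪-D (P u), P u⟫ * ⟪D v, v⟫ + ⟪D (P u), v⟫ ^ 2
              - ⟪u, T⟫ ^ 2 * ⟪v, N v⟫)
            / (⟪u, u⟫ * ⟪v, v⟫ - ⟪u, v⟫ ^ 2)) ∧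
    ((∀ w ∈ W, D w = w) → (∀ w ∈ W, N w = w) →
      ∀ u v : E, v ∈ W → ⟪u, u⟫ * ⟪v, v⟫ - ⟪u, v⟫ ^ 2 ≠ 0 →
        ⟪Rm u v v, u⟫ / (⟪u, u⟫ * ⟪v, v⟫ - ⟪u, v⟫ ^ 2) = -1) := by
  intro Rm
  have key : ∀ u v : E, v ∈ W →
      ⟪Rm u v v, u⟫ = ⟪-D (P u), P u⟫ * ⟪D v, v⟫ + ⟪D (P u), v⟫ ^ 2
        - ⟪u, T⟫ ^ 2 * ⟪v, N v⟫ := by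
    intro u v hv
    have hPv : P v = v := hPfix v hv
    have hvT : ⟪v, T⟫ = (0:ℝ) := by rw [real_inner_comm]; exact hTW v hv
    have split : ∀ w, w ∈ W → ⟪w, u⟫ = ⟪w, P u⟫ := by
      intro w hw
      have hwT : ⟪w, T⟫ = (0:ℝ) := by rw [real_inner_comm]; exact hTW w hw
      nth_rewrite 1 [hdecomp u]
      rw [inner_add_right, real_inner_smul_right, hwT]
      ring
    have h1 : ⟪D (P u), u⟫ = ⟪D (P u), P u⟫ := split _ (hDW _)
    have h2 : ⟪D v, u⟫ = ⟪D (P u), v⟫ := by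
      rw [split _ (hDW v), hDsym v (P u), real_inner_comm]
    have h3 : ⟪T, u⟫ = ⟪u, T⟫ := real_inner_comm _ _
    simp only [Rm, hPv, hvT, zero_smul, smul_zero, sub_zero, add_zero,
      inner_add_left, inner_sub_left, real_inner_smul_left, inner_neg_left,
      real_inner_smul_right, inner_zero_right, mul_zero, h1, h2, h3]
    ring
  refine ⟨fun u v hv => by rw [key u v hv], ?_⟩
  intro hD hN u v hv hden
  have hvT : ⟪v, T⟫ = (0:ℝ) := by rw [real_inner_comm]; exact hTW v hv
  have hTv : ⟪T, v⟫ = (0:ℝ) := hTW v hv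
  have hDv : D v = v := hD v hv
  have hNv : N v = v := hN v hv
  have hDPu : D (P u) = P u := hD _ (hPW u)
  have hPuT : ⟪P u, T⟫ = (0:ℝ) := by rw [real_inner_comm]; exact hTW _ (hPW u)
  have hTPu : ⟪T, P u⟫ = (0:ℝ) := hTW _ (hPW u)
  have huu : ⟪u, u⟫ = ⟪P u, P u⟫ + ⟪u, T⟫ ^ 2 := by
    conv_lhs => rw [hdecomp u]
    simp only [inner_add_left, inner_add_right, real_inner_smul_left,
      real_inner_smul_right, hPuT, hTPu, hT]
    ring
  have huv : ⟪u, v⟫ = ⟪P u, v⟫ := by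
    conv_lhs => rw [hdecomp u]
    simp only [inner_add_left, real_inner_smul_left, hTv]
    ring
  rw [key u v hv, hDv, hNv, hDPu, inner_neg_left]
  rw [huu, huv] at hden ⊢
  rw [div_eq_iff hden]
  ring
end
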